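/- There is an open and dense subset O of Homeo₊(S¹) such that every f ∈ O has rational rotation number, and moreover the rotation number function f ↦ ρ(f) is locally constant on O. -/

import Mathlib

open MeasureTheory Filter Topology ENNReal Function

noncomputable section

theorem Real.fact_zero_lt_one : Fact ((0 : ℝ) < 1) := ⟨one_pos⟩

attribute [local instance] Real.fact_zero_lt_one

/-- The circle `ℝ/ℤ`. -/
abbrev Circle1 := AddCircle (1 : ℝ)

/-- `F` is an increasing (degree-one) lift of the circle map `f`. -/
def IsOrientedLift (f : Circle1 → Circle1) (F : ℝ → ℝ) : Prop :=
  Continuous F ∧ StrictMono F ∧ (∀ x : ℝ, F (x + 1) = F x + 1) ∧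
    ∀ x : ℝ, f (↑x) = ↑(F x)

/-- The space `Homeo₊(S¹)` of orientation-preserving self-homeomorphisms of the circle, with
the uniform (`C⁰`) topology: self-homeomorphisms admitting an increasing lift. -/
abbrev HomeoPlus := {f : C(Circle1, Circle1) // IsHomeomorph ⇑f ∧ ∃ F, IsOrientedLift ⇑f F}

/-- `ρ` is the rotation number of `f`: for a lift `F` of `f`, the limit `lim Fⁿ(0)/n` exists
and equals `ρ` modulo 1.  (For an orientation-preserving circle homeomorphism this limit is
independent of the base point and of the choice of lift.) -/
def HasRotationNumber (f : Circle1 → Circle1) (ρ : Circle1) : Prop :=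
  ∃ (F : ℝ → ℝ) (L : ℝ), IsOrientedLift f F ∧
    Tendsto (fun n : ℕ => F^[n] 0 / n) atTop (𝓝 L) ∧ (↑L : Circle1) = ρ

/-! ### Auxiliary machinery -/

namespace RotAux

open CircleDeg1Lift

/-- Build a `CircleDeg1Lift` from a monotone degree-one map. -/
def mkLift (G : ℝ → ℝ) (hm : Monotone G) (h1 : ∀ x, G (x + 1) = G x + 1) : CircleDeg1Lift :=
  ⟨⟨G, hm⟩, h1⟩

@[simp] lemma mkLift_coe (G : ℝ → ℝ) (hm : Monotone G) (h1 : ∀ x, G (x + 1) = G x + 1) :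
    ⇑(mkLift G hm h1) = G := rfl

/-- The lift associated to an oriented lift witness. -/
def ofLift {f : Circle1 → Circle1} {F : ℝ → ℝ} (hF : IsOrientedLift f F) : CircleDeg1Lift :=
  mkLift F hF.2.1.monotone hF.2.2.1

@[simp] lemma ofLift_coe {f : Circle1 → Circle1} {F : ℝ → ℝ} (hF : IsOrientedLift f F) :
    ⇑(ofLift hF) = F := rfl

/-- Transverse crossing data: `F^[q]` goes strictly below and strictly above `x + p`. -/
def Crossing (G : ℝ → ℝ) (p : ℤ) (q : ℕ) : Prop :=
  (∃ x : ℝ, G^[q] x < x + p) ∧ (∃ y : ℝ, y + (p : ℝ) < G^[q] y)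

lemma translationNumber_eq_of_crossing {F : CircleDeg1Lift} {p : ℤ} {q : ℕ}
    (h : Crossing (⇑F) p q) : (q : ℝ) * F.translationNumber = p := by
  obtain ⟨⟨x, hx⟩, ⟨y, hy⟩⟩ := h
  have hx' : (F ^ q) x ≤ x + p := by rw [CircleDeg1Lift.coe_pow]; exact hx.le
  have hy' : y + (p : ℝ) ≤ (F ^ q) y := by rw [CircleDeg1Lift.coe_pow]; exact hy.le
  have h1 : (F ^ q).translationNumber ≤ p := (F ^ q).translationNumber_le_of_le_add_int hx'
  have h2 : (p : ℝ) ≤ (F ^ q).translationNumber := (F ^ q).le_translationNumber_of_add_int_le hy'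
  have := le_antisymm h1 h2
  rwa [CircleDeg1Lift.translationNumber_pow] at this

/-! ### Basic `AddCircle` facts -/

lemma coe_int_eq_zero (m : ℤ) : (((m : ℝ)) : Circle1) = 0 :=
  (AddCircle.coe_eq_zero_iff (1:ℝ)).mpr ⟨m, by simp⟩

lemma coe_sub_eq (a b : ℝ) : ((a - b : ℝ) : Circle1) = (a : Circle1) - b :=
  by exact QuotientAddGroup.mk_sub _ a b

lemma norm_coe_le (y : ℝ) : ‖(y : Circle1)‖ ≤ |y| := by
  rw [AddCircle.norm_eq]
  simpa using (round_le y 0).trans (by simp)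

lemma dist_coe_le (a b : ℝ) : dist (a : Circle1) (b : Circle1) ≤ |a - b| := by
  rw [dist_eq_norm, ← coe_sub_eq]; exact norm_coe_le _

lemma coe_surj : Function.Surjective ((↑·) : ℝ → Circle1) := fun z => by
  induction z using QuotientAddGroup.induction_on with
  | H x => exact ⟨x, rfl⟩

lemma exists_int_of_coe_eq {a b : ℝ} (h : (a : Circle1) = b) : ∃ m : ℤ, b - a = m := by
  have : ((b - a : ℝ) : Circle1) = 0 := by
    rw [coe_sub_eq, h, sub_self]
  obtain ⟨m, hm⟩ := (AddCircle.coe_eq_zero_iff (1:ℝ)).mp this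
  exact ⟨m, by simpa using hm.symm⟩


open CircleDeg1Lift

/-! ### Lifts of the same map differ by an integer -/

lemma lift_sub_int {f : Circle1 → Circle1} {F G : ℝ → ℝ} (hF : IsOrientedLift f F)
    (hG : IsOrientedLift f G) : ∃ k : ℤ, ∀ x, G x = F x + k := by
  have hint : ∀ x : ℝ, ∃ m : ℤ, G x - F x = m := by
    intro x
    have h1 : ((F x : ℝ) : Circle1) = G x := by rw [← hF.2.2.2 x, ← hG.2.2.2 x]
    exact exists_int_of_coe_eq h1
  have hd : Continuous fun x => G x - F x := hG.1.sub hF.1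
  obtain ⟨k, hk⟩ := hint 0
  refine ⟨k, fun x => ?_⟩
  obtain ⟨m, hm⟩ := hint x
  rcases eq_or_ne m k with rfl | hne
  · linarith [hm]
  · exfalso
    set v : ℝ := (max m k : ℤ) - 1 / 2 with hv
    have hbetween : v ∈ Set.uIcc (G 0 - F 0) (G x - F x) := by
      rw [hk, hm]
      rcases lt_or_gt_of_ne hne with h | h
      · have : (m : ℝ) + 1 ≤ k := by exact_mod_cast Int.add_one_le_iff.mpr h
        have hmax : (max m k : ℤ) = k := max_eq_right h.le
        rw [Set.mem_uIcc]; right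
        constructor <;> [skip; skip] <;> · rw [hv, hmax]; push_cast; linarith
      · have : (k : ℝ) + 1 ≤ m := by exact_mod_cast Int.add_one_le_iff.mpr h
        have hmax : (max m k : ℤ) = m := max_eq_left h.le
        rw [Set.mem_uIcc]; left
        constructor <;> · rw [hv, hmax]; push_cast; linarith
    obtain ⟨z, _, hz⟩ := intermediate_value_uIcc (hd.continuousOn (s := Set.uIcc 0 x)) hbetween
    obtain ⟨j, hj⟩ := hint z
    have hz' : G z - F z = v := hz
    rw [hj, hv] at hz'
    have : (2 * j : ℝ) = 2 * (max m k : ℤ) - 1 := by linarith [hz']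
    have : (2 * j : ℤ) = 2 * max m k - 1 := by exact_mod_cast this
    omega

/-- Every oriented circle map has its canonical rotation number. -/
lemma hasRotationNumber_ofLift {f : Circle1 → Circle1} {F : ℝ → ℝ} (hF : IsOrientedLift f F) :
    HasRotationNumber f ((ofLift hF).translationNumber : ℝ) := by
  refine ⟨F, (ofLift hF).translationNumber, hF, ?_, rfl⟩
  have := (ofLift hF).tendsto_translation_number₀
  simpa only [CircleDeg1Lift.coe_pow, ofLift_coe] using this

/-- Any rotation number of `f` agrees with the canonical one mod 1. -/
lemma rotationNumber_unique {f : Circle1 → Circle1} {F : ℝ → ℝ} (hF : IsOrientedLift f F)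
    {ρ : Circle1} (h : HasRotationNumber f ρ) :
    ρ = ((ofLift hF).translationNumber : ℝ) := by
  obtain ⟨G, L, hG, hlim, hL⟩ := h
  obtain ⟨k, hk⟩ := lift_sub_int hF hG
  -- `G = F + k`, hence its translation number is `τ F + k`.
  have hGF : ofLift hG =
      (↑(translate (Multiplicative.ofAdd (k : ℝ))) : CircleDeg1Lift) * ofLift hF := by
    apply CircleDeg1Lift.ext
    intro x
    simp [translate_apply, hk x, add_comm]
  have hcomm : Commute (↑(translate (Multiplicative.ofAdd (k : ℝ))) : CircleDeg1Lift)
      (ofLift hF) := by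
    rw [CircleDeg1Lift.commute_iff_commute]
    intro x
    simp only [Function.comp, translate_apply, ofLift_coe]
    exact ((ofLift hF).map_int_add k x).symm
  have hτ : (ofLift hG).translationNumber = (k : ℝ) + (ofLift hF).translationNumber := by
    rw [hGF, translationNumber_mul_of_commute hcomm, translationNumber_translate]
  have hLτ : L = (ofLift hG).translationNumber := by
    have h2 := (ofLift hG).tendsto_translation_number₀
    simp only [CircleDeg1Lift.coe_pow, ofLift_coe] at h2
    exact tendsto_nhds_unique hlim h2
  rw [← hL, hLτ, hτ, AddCircle.coe_add, coe_int_eq_zero, zero_add]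


open CircleDeg1Lift

/-! ### Uniform continuity of continuous degree-one lifts -/

lemma ucont (F : CircleDeg1Lift) (hF : Continuous F) {ε : ℝ} (hε : 0 < ε) :
    ∃ δ > 0, ∀ x y : ℝ, |x - y| ≤ δ → |F x - F y| ≤ ε := by
  have hc : UniformContinuousOn F (Set.Icc (-1 : ℝ) 2) :=
    (isCompact_Icc).uniformContinuousOn_of_continuous (hF.continuousOn)
  rw [Metric.uniformContinuousOn_iff] at hc
  obtain ⟨δ₀, hδ₀, hδ⟩ := hc ε hε
  refine ⟨min (δ₀ / 2) (1 / 2), by positivity, fun x y hxy => ?_⟩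
  set n : ℤ := ⌊x⌋ with hn
  have hx1 : x - n ∈ Set.Icc (-1 : ℝ) 2 := by
    constructor <;> [linarith [Int.floor_le x]; linarith [Int.lt_floor_add_one x]]
  have hxy' : |x - y| ≤ 1 / 2 := hxy.trans (min_le_right _ _)
  have hy1 : y - n ∈ Set.Icc (-1 : ℝ) 2 := by
    rw [abs_le] at hxy'
    constructor <;>
      [linarith [Int.floor_le x, hxy'.1, hxy'.2]; linarith [Int.lt_floor_add_one x, hxy'.1, hxy'.2]]
  have hdist : dist (x - n) (y - n) < δ₀ := by
    rw [Real.dist_eq]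
    have : x - n - (y - n) = x - y := by ring
    rw [this]
    exact lt_of_le_of_lt (hxy.trans (min_le_left _ _)) (by linarith)
  have := hδ (x - n) hx1 (y - n) hy1 hdist
  rw [Real.dist_eq, F.map_sub_int, F.map_sub_int] at this
  have h2 : F x - n - (F y - n) = F x - F y := by ring
  rw [h2] at this
  exact this.le

/-! ### Iterates of nearby maps stay close -/

lemma iter_approx (F : CircleDeg1Lift) (hF : Continuous F) (q : ℕ) :
    ∀ δ > (0 : ℝ), ∃ ε > (0 : ℝ), ∀ G : ℝ → ℝ, (∀ x, |G x - F x| ≤ ε) →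
      ∀ x, |G^[q] x - (⇑F)^[q] x| ≤ δ := by
  induction q with
  | zero => intro δ hδ; exact ⟨δ, hδ, fun G _ x => by simpa using hδ.le⟩
  | succ q ih =>
    intro δ hδ
    obtain ⟨η, hη, hηb⟩ := ucont F hF (ε := δ / 2) (by positivity)
    obtain ⟨ε₁, hε₁, hε₁b⟩ := ih η hη
    refine ⟨min ε₁ (δ / 2), by positivity, fun G hG x => ?_⟩
    have hGε₁ : ∀ x, |G x - F x| ≤ ε₁ := fun x => (hG x).trans (min_le_left _ _)
    have h1 : |G^[q] x - (⇑F)^[q] x| ≤ η := hε₁b G hGε₁ x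
    rw [Function.iterate_succ_apply', Function.iterate_succ_apply']
    have h2 : |G (G^[q] x) - F (G^[q] x)| ≤ δ / 2 := (hG _).trans (min_le_right _ _)
    have h3 : |F (G^[q] x) - F ((⇑F)^[q] x)| ≤ δ / 2 := hηb _ _ h1
    calc |G (G^[q] x) - F ((⇑F)^[q] x)|
        ≤ |G (G^[q] x) - F (G^[q] x)| + |F (G^[q] x) - F ((⇑F)^[q] x)| := abs_sub_le _ _ _
      _ ≤ δ / 2 + δ / 2 := add_le_add h2 h3
      _ = δ := by ring

/-! ### Aligning lifts of nearby circle maps -/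

lemma lift_align {f g : Circle1 → Circle1} {F G₀ : ℝ → ℝ} (hF : IsOrientedLift f F)
    (hG : IsOrientedLift g G₀) {ε : ℝ} (hε1 : ε ≤ 1 / 3)
    (hd : ∀ z : Circle1, dist (f z) (g z) < ε) :
    ∃ G : ℝ → ℝ, IsOrientedLift g G ∧ ∀ x, |G x - F x| ≤ ε := by
  set d : ℝ → ℝ := fun x => G₀ x - F x with hdd
  have hdc : Continuous d := hG.1.sub hF.1
  have hround : ∀ x : ℝ, |d x - round (d x)| < ε := by
    intro x
    have h1 : dist (f (x : ℝ)) (g (x : ℝ)) < ε := hd _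
    rw [hF.2.2.2 x, hG.2.2.2 x] at h1
    have h2 : dist ((F x : ℝ) : Circle1) ((G₀ x : ℝ) : Circle1) = ‖((d x : ℝ) : Circle1)‖ := by
      rw [dist_comm, dist_eq_norm, ← coe_sub_eq]
    rw [h2, AddCircle.norm_eq] at h1
    simpa using h1
  set k : ℤ := round (d 0) with hk
  have hconst : ∀ x, round (d x) = k := by
    intro x
    by_contra hne
    have h0 := hround 0
    have hx := hround x
    rw [abs_lt] at h0 hx
    set m : ℤ := round (d x) with hm
    rw [← hk] at h0
    have hd0 := h0
    have hdx := hx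
    clear_value k m d
    have hbetween : (((max m k : ℤ) : ℝ) - 1 / 2) ∈ Set.uIcc (d 0) (d x) := by
      rcases lt_or_gt_of_ne hne with h | h
      · have hle : (m : ℝ) + 1 ≤ k := by exact_mod_cast Int.add_one_le_iff.mpr h
        have hmax : (max m k : ℤ) = k := max_eq_right h.le
        rw [Set.mem_uIcc]; right; rw [hmax]
        constructor <;> linarith [hdx.1, hdx.2, hd0.1, hd0.2]
      · have hle : (k : ℝ) + 1 ≤ m := by exact_mod_cast Int.add_one_le_iff.mpr h
        have hmax : (max m k : ℤ) = m := max_eq_left h.le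
        rw [Set.mem_uIcc]; left; rw [hmax]
        constructor <;> linarith [hdx.1, hdx.2, hd0.1, hd0.2]
    obtain ⟨z, _, hz⟩ := intermediate_value_uIcc (hdc.continuousOn (s := Set.uIcc 0 x)) hbetween
    have hz' : d z = ((max m k : ℤ) : ℝ) - 1 / 2 := hz
    have hzr := hround z
    rw [hz'] at hzr
    have hrv : round (((max m k : ℤ) : ℝ) - 1 / 2) = max m k := by
      rw [round_eq]
      have h3 : ((max m k : ℤ) : ℝ) - 1 / 2 + 1 / 2 = ((max m k : ℤ) : ℝ) := by ring
      rw [h3, Int.floor_intCast]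
    rw [hrv] at hzr
    have h2 : |((max m k : ℤ) : ℝ) - 1 / 2 - ((max m k : ℤ) : ℝ)| = 1 / 2 := by
      rw [show ((max m k : ℤ) : ℝ) - 1 / 2 - ((max m k : ℤ) : ℝ) = -(1 / 2) by ring, abs_neg]
      norm_num
    rw [h2] at hzr
    linarith
  refine ⟨fun x => G₀ x - k, ⟨hG.1.sub continuous_const, ?_, ?_, ?_⟩, ?_⟩
  · intro a b hab; exact sub_lt_sub_right (hG.2.1 hab) _
  · intro x; show G₀ (x + 1) - (k : ℝ) = G₀ x - (k : ℝ) + 1; rw [hG.2.2.1 x]; ring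
  · intro x
    rw [show ((G₀ x - (k : ℝ) : ℝ) : Circle1) = ((G₀ x : ℝ) : Circle1) - ((k : ℝ) : Circle1) from
      coe_sub_eq _ _, coe_int_eq_zero, sub_zero]
    exact hG.2.2.2 x
  · intro x
    have := hround x
    rw [hconst x] at this
    calc |G₀ x - k - F x| = |d x - k| := by rw [hdd]; ring_nf
    _ ≤ ε := by linarith [this]

open CircleDeg1Lift

/-! ### The family `F + t` and its crossing functions -/

/-- The lift `x ↦ F x + t`. -/
def shift (F : CircleDeg1Lift) (t : ℝ) : CircleDeg1Lift :=
  mkLift (fun x => F x + t) (fun a b hab => by simpa using F.mono hab)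
    (fun x => by simp [F.map_add_one]; ring)

@[simp] lemma shift_coe (F : CircleDeg1Lift) (t : ℝ) : ⇑(shift F t) = fun x => F x + t := rfl

lemma shift_continuous {F : CircleDeg1Lift} (hF : Continuous F) (t : ℝ) :
    Continuous (shift F t) := by
  exact hF.add continuous_const

/-- `eF F q t x = (F + t)^[q] x - x`, the displacement function of the `q`-th iterate. -/
def eF (F : CircleDeg1Lift) (q : ℕ) (t x : ℝ) : ℝ := (⇑(shift F t))^[q] x - x

lemma eF_cont {F : CircleDeg1Lift} (hF : Continuous F) (q : ℕ) (t : ℝ) :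
    Continuous (fun x => eF F q t x) :=
  ((shift_continuous hF t).iterate q).sub continuous_id

lemma iter_map_add_int (G : CircleDeg1Lift) (q : ℕ) (x : ℝ) (m : ℤ) :
    (⇑G)^[q] (x + m) = (⇑G)^[q] x + m := by
  have := (G ^ q).map_add_int x m
  rwa [CircleDeg1Lift.coe_pow] at this

lemma eF_periodic (F : CircleDeg1Lift) (q : ℕ) (t x : ℝ) (m : ℤ) :
    eF F q t (x + m) = eF F q t x := by
  unfold eF
  rw [iter_map_add_int (shift F t) q x m]
  ring

/-- Monotone dependence of iterates on `t`. -/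
lemma iter_shift_mono (F : CircleDeg1Lift) {s t : ℝ} (hst : s ≤ t) (q : ℕ) (x : ℝ) :
    (⇑(shift F s))^[q] x ≤ (⇑(shift F t))^[q] x := by
  induction q with
  | zero => simp
  | succ q ih =>
    rw [Function.iterate_succ_apply', Function.iterate_succ_apply']
    calc (shift F s) ((⇑(shift F s))^[q] x) ≤ (shift F s) ((⇑(shift F t))^[q] x) :=
          (shift F s).mono ih
      _ ≤ (shift F t) ((⇑(shift F t))^[q] x) := by simp [hst]

/-- Strict gain of iterates when `t` increases, `q ≥ 1`. -/
lemma iter_shift_gain (F : CircleDeg1Lift) {s t : ℝ} (hst : s ≤ t) {q : ℕ} (hq : 1 ≤ q) (x : ℝ) :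
    (⇑(shift F s))^[q] x + (t - s) ≤ (⇑(shift F t))^[q] x := by
  induction q, hq using Nat.le_induction with
  | base => simp
  | succ q hq ih =>
    rw [Function.iterate_succ_apply', Function.iterate_succ_apply']
    have hs : ∀ z : ℝ, (shift F s) z = F z + s := fun _ => rfl
    have ht : ∀ z : ℝ, (shift F t) z = F z + t := fun _ => rfl
    rw [hs, ht]
    have h1 : F ((⇑(shift F s))^[q] x) ≤ F ((⇑(shift F t))^[q] x) := F.mono (by linarith)
    linarith

/-- max of the displacement over a period. -/
def maxE (F : CircleDeg1Lift) (q : ℕ) (t : ℝ) : ℝ := sSup (eF F q t '' Set.Icc 0 1)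

def minE (F : CircleDeg1Lift) (q : ℕ) (t : ℝ) : ℝ := sInf (eF F q t '' Set.Icc 0 1)

lemma eF_reduce (F : CircleDeg1Lift) (q : ℕ) (t y : ℝ) :
    eF F q t y = eF F q t (Int.fract y) := by
  have h1 : Int.fract y + (⌊y⌋ : ℤ) = y := by
    rw [add_comm]; exact Int.floor_add_fract y
  conv_lhs => rw [← h1]
  rw [eF_periodic]

lemma maxE_spec {F : CircleDeg1Lift} (hF : Continuous F) (q : ℕ) (t : ℝ) :
    (∃ x, eF F q t x = maxE F q t) ∧ ∀ y, eF F q t y ≤ maxE F q t := by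
  obtain ⟨x₀, hx₀m, hx₀⟩ := isCompact_Icc.exists_isMaxOn (Set.nonempty_Icc.mpr zero_le_one)
    ((eF_cont hF q t).continuousOn)
  have hgr : IsGreatest (eF F q t '' Set.Icc 0 1) (eF F q t x₀) :=
    ⟨Set.mem_image_of_mem _ hx₀m, fun y ⟨z, hz, hzy⟩ => hzy ▸ hx₀ hz⟩
  constructor
  · exact ⟨x₀, hgr.csSup_eq.symm⟩
  · intro y
    rw [eF_reduce F q t y]
    exact le_csSup hgr.bddAbove (Set.mem_image_of_mem _
      ⟨Int.fract_nonneg y, (Int.fract_lt_one y).le⟩)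

lemma minE_spec {F : CircleDeg1Lift} (hF : Continuous F) (q : ℕ) (t : ℝ) :
    (∃ x, eF F q t x = minE F q t) ∧ ∀ y, minE F q t ≤ eF F q t y := by
  obtain ⟨x₀, hx₀m, hx₀⟩ := isCompact_Icc.exists_isMinOn (Set.nonempty_Icc.mpr zero_le_one)
    ((eF_cont hF q t).continuousOn)
  have hgr : IsLeast (eF F q t '' Set.Icc 0 1) (eF F q t x₀) :=
    ⟨Set.mem_image_of_mem _ hx₀m, fun y ⟨z, hz, hzy⟩ => hzy ▸ hx₀ hz⟩
  constructor
  · exact ⟨x₀, hgr.csInf_eq.symm⟩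
  · intro y
    rw [eF_reduce F q t y]
    exact csInf_le hgr.bddBelow (Set.mem_image_of_mem _
      ⟨Int.fract_nonneg y, (Int.fract_lt_one y).le⟩)

/-- Brackets: `minE ≤ q·τ(F+t) ≤ maxE`. -/
lemma minE_le_tau {F : CircleDeg1Lift} (hF : Continuous F) (q : ℕ) (t : ℝ) :
    minE F q t ≤ (q : ℝ) * (shift F t).translationNumber := by
  rw [← CircleDeg1Lift.translationNumber_pow]
  apply le_translationNumber_of_add_le
  intro x
  have := (minE_spec hF q t).2 x
  rw [CircleDeg1Lift.coe_pow]
  unfold eF at this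
  linarith

lemma tau_le_maxE {F : CircleDeg1Lift} (hF : Continuous F) (q : ℕ) (t : ℝ) :
    (q : ℝ) * (shift F t).translationNumber ≤ maxE F q t := by
  rw [← CircleDeg1Lift.translationNumber_pow]
  apply translationNumber_le_of_le_add
  intro x
  have := (maxE_spec hF q t).2 x
  rw [CircleDeg1Lift.coe_pow]
  unfold eF at this
  linarith

lemma crossing_of {F : CircleDeg1Lift} (hF : Continuous F) {p : ℤ} {q : ℕ} {t : ℝ}
    (h1 : minE F q t < p) (h2 : (p : ℝ) < maxE F q t) : Crossing (⇑(shift F t)) p q := by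
  obtain ⟨x, hx⟩ := (minE_spec hF q t).1
  obtain ⟨y, hy⟩ := (maxE_spec hF q t).1
  unfold eF at hx hy
  exact ⟨⟨x, by linarith⟩, ⟨y, by linarith⟩⟩

/-- Gain for maxE/minE. -/
lemma maxE_gain {F : CircleDeg1Lift} (hF : Continuous F) {s t : ℝ} (hst : s ≤ t) {q : ℕ}
    (hq : 1 ≤ q) : maxE F q s + (t - s) ≤ maxE F q t := by
  obtain ⟨x, hx⟩ := (maxE_spec hF q s).1
  have h1 := iter_shift_gain F hst hq x
  have h2 := (maxE_spec hF q t).2 x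
  unfold eF at hx h2
  linarith

lemma minE_gain {F : CircleDeg1Lift} (hF : Continuous F) {s t : ℝ} (hst : s ≤ t) {q : ℕ}
    (hq : 1 ≤ q) : minE F q s + (t - s) ≤ minE F q t := by
  obtain ⟨x, hx⟩ := (minE_spec hF q t).1
  have h1 := iter_shift_gain F hst hq x
  have h2 := (minE_spec hF q s).2 x
  unfold eF at hx h2
  linarith

/-- `ε`–`δ` continuity of `maxE` and `minE` in the parameter `t`. -/
lemma maxE_minE_close {F : CircleDeg1Lift} (hF : Continuous F) (q : ℕ) (t₀ : ℝ) {δ : ℝ}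
    (hδ : 0 < δ) : ∃ ε > 0, ∀ t', |t' - t₀| ≤ ε →
      |maxE F q t' - maxE F q t₀| ≤ δ ∧ |minE F q t' - minE F q t₀| ≤ δ := by
  obtain ⟨ε, hε, hεb⟩ := iter_approx (shift F t₀) (shift_continuous hF t₀) q δ hδ
  refine ⟨ε, hε, fun t' ht' => ?_⟩
  have hb : ∀ x, |(⇑(shift F t'))^[q] x - (⇑(shift F t₀))^[q] x| ≤ δ := by
    apply hεb
    intro x
    simp only [shift_coe]
    rw [show F x + t' - (F x + t₀) = t' - t₀ by ring]
    exact ht'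
  have he : ∀ x, |eF F q t' x - eF F q t₀ x| ≤ δ := by
    intro x; unfold eF
    rw [show (⇑(shift F t'))^[q] x - x - ((⇑(shift F t₀))^[q] x - x)
      = (⇑(shift F t'))^[q] x - (⇑(shift F t₀))^[q] x by ring]
    exact hb x
  constructor
  · rw [abs_le]
    obtain ⟨x1, hx1⟩ := (maxE_spec hF q t').1
    obtain ⟨x0, hx0⟩ := (maxE_spec hF q t₀).1
    have h1 := (maxE_spec hF q t₀).2 x1
    have h2 := (maxE_spec hF q t').2 x0
    have e1 := abs_le.mp (he x1)
    have e2 := abs_le.mp (he x0)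
    constructor <;> linarith
  · rw [abs_le]
    obtain ⟨x1, hx1⟩ := (minE_spec hF q t').1
    obtain ⟨x0, hx0⟩ := (minE_spec hF q t₀).1
    have h1 := (minE_spec hF q t₀).2 x1
    have h2 := (minE_spec hF q t').2 x0
    have e1 := abs_le.mp (he x1)
    have e2 := abs_le.mp (he x0)
    constructor <;> linarith


open CircleDeg1Lift

/-- On any parameter interval `[0, t1]` of the family `F + t`, there is a parameter with either
a transverse crossing or a rigid (periodic) behaviour. -/
lemma cross_or_rigid (F : CircleDeg1Lift) (hF : Continuous F) {t1 : ℝ} (ht1 : 0 < t1) :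
    ∃ s ∈ Set.Icc (0 : ℝ) t1, ∃ p : ℤ, ∃ q : ℕ, 0 < q ∧
      (Crossing (⇑(shift F s)) p q ∨ ∀ x, (⇑(shift F s))^[q] x = x + p) := by
  by_cases hCc : ∃ s ∈ Set.Icc (0 : ℝ) t1, ∃ p : ℤ, ∃ q : ℕ, 0 < q ∧ Crossing (⇑(shift F s)) p q
  · obtain ⟨s, hs, p, q, hq, hc⟩ := hCc
    exact ⟨s, hs, p, q, hq, Or.inl hc⟩
  push_neg at hCc
  set τ0 := (shift F 0).translationNumber with hτ0
  set τ1 := (shift F t1).translationNumber with hτ1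
  have hmono : τ0 ≤ τ1 :=
    CircleDeg1Lift.translationNumber_mono
      (show shift F 0 ≤ shift F t1 from fun x => by
        show F x + 0 ≤ F x + t1; linarith)
  rcases eq_or_lt_of_le hmono with heq | hlt
  · -- constant case: contradiction via Dirichlet approximation
    exfalso
    have key : ∀ q : ℕ, 0 < q → ∀ p : ℤ, t1 / 2 ≤ |(q : ℝ) * τ0 - p| := by
      intro q hq p
      by_contra hcon
      push_neg at hcon
      have habs := abs_lt.mp hcon
      have hq' : 1 ≤ q := hq
      have h1 : minE F q (t1 / 2) < p := by
        have g1 : minE F q (t1 / 2) + (t1 - t1 / 2) ≤ minE F q t1 :=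
          minE_gain hF (by linarith) hq'
        have g2 : minE F q t1 ≤ (q : ℝ) * τ1 := minE_le_tau hF q t1
        rw [← heq] at g2
        linarith [habs.2]
      have h2 : (p : ℝ) < maxE F q (t1 / 2) := by
        have g1 : maxE F q 0 + (t1 / 2 - 0) ≤ maxE F q (t1 / 2) :=
          maxE_gain hF (by linarith) hq'
        have g2 : (q : ℝ) * τ0 ≤ maxE F q 0 := tau_le_maxE hF q 0
        linarith [habs.1]
      exact hCc (t1 / 2) ⟨by linarith, by linarith⟩ p q hq (crossing_of hF h1 h2)
    obtain ⟨n, hn⟩ := exists_nat_one_div_lt (show (0 : ℝ) < t1 / 2 by linarith)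
    obtain ⟨j, k, hk0, hkn, hjk⟩ :=
      Real.exists_int_int_abs_mul_sub_le τ0 (n := n + 1) (by omega)
    have hkq : 0 < k.toNat := by omega
    have hcast : ((k.toNat : ℕ) : ℝ) = (k : ℝ) := by
      exact_mod_cast Int.toNat_of_nonneg hk0.le
    have := key k.toNat hkq j
    rw [hcast] at this
    have hb : |(k : ℝ) * τ0 - j| ≤ 1 / ((n : ℝ) + 1 + 1) := by exact_mod_cast hjk
    have h2 : 1 / ((n : ℝ) + 1 + 1) ≤ 1 / ((n : ℝ) + 1) :=
      one_div_le_one_div_of_le (by positivity) (by linarith)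
    linarith [h2]
  · -- strictly increasing case
    obtain ⟨q, hq⟩ := exists_nat_gt (2 / (τ1 - τ0))
    have hΔ : 0 < τ1 - τ0 := by linarith
    have hq0 : 0 < q := by
      by_contra h
      push_neg at h
      interval_cases q
      · simp at hq
        have : 0 < 2 / (τ1 - τ0) := by positivity
        linarith
    have hqΔ : 2 < (q : ℝ) * (τ1 - τ0) := by
      rw [div_lt_iff₀ hΔ] at hq
      linarith
    set p : ℤ := ⌊(q : ℝ) * τ0⌋ + 1 with hp
    have hp1 : (q : ℝ) * τ0 < p := by
      rw [hp]; push_cast; exact Int.lt_floor_add_one _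
    have hp2 : (p : ℝ) < (q : ℝ) * τ1 := by
      have h3 := Int.floor_le ((q : ℝ) * τ0)
      rw [hp]; push_cast; nlinarith
    by_cases h0 : (p : ℝ) < maxE F q 0
    · exact absurd (crossing_of hF (lt_of_le_of_lt (minE_le_tau hF q 0) hp1) h0)
        (hCc 0 ⟨le_refl _, ht1.le⟩ p q hq0)
    push_neg at h0
    set S : Set ℝ := {t | t ∈ Set.Icc (0 : ℝ) t1 ∧ maxE F q t ≤ p} with hS
    have hS0 : (0 : ℝ) ∈ S := ⟨⟨le_refl _, ht1.le⟩, h0⟩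
    have hSne : S.Nonempty := ⟨0, hS0⟩
    have hSb : BddAbove S := ⟨t1, fun t ht => ht.1.2⟩
    set s : ℝ := sSup S with hs
    have hs0 : 0 ≤ s := le_csSup hSb hS0
    have hs1 : s ≤ t1 := csSup_le hSne fun t ht => ht.1.2
    have hψ : maxE F q s ≤ p := by
      by_contra hgt
      push_neg at hgt
      have hδ : 0 < (maxE F q s - p) / 2 := by linarith
      obtain ⟨ε, hε, hεb⟩ := maxE_minE_close hF q s hδ
      obtain ⟨t, htS, htlt⟩ := exists_lt_of_lt_csSup hSne (show s - ε < s by linarith)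
      have htle : t ≤ s := le_csSup hSb htS
      have habs : |t - s| ≤ ε := by rw [abs_le]; constructor <;> linarith
      have := (hεb t habs).1
      rw [abs_le] at this
      have : (p : ℝ) < maxE F q t := by linarith [this.1]
      linarith [htS.2]
    have hst1 : s < t1 := by
      have hmm : (p : ℝ) < maxE F q t1 := lt_of_lt_of_le hp2 (tau_le_maxE hF q t1)
      rcases lt_or_eq_of_le hs1 with h | h
      · exact h
      · exfalso; rw [h] at hψ; linarith
    by_cases hχ : minE F q s < p
    · exfalso
      have hδ : 0 < ((p : ℝ) - minE F q s) / 2 := by linarith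
      obtain ⟨ε, hε, hεb⟩ := maxE_minE_close hF q s hδ
      set t : ℝ := min (s + ε) t1 with htdef
      have hts : s < t := lt_min (by linarith) hst1
      have htt1 : t ≤ t1 := min_le_right _ _
      have habs : |t - s| ≤ ε := by
        rw [abs_le]
        constructor
        · linarith [hts.le]
        · have : t ≤ s + ε := min_le_left _ _
          linarith
      have hminlt : minE F q t < p := by
        have := (hεb t habs).2
        rw [abs_le] at this
        linarith [this.2]
      have hmaxgt : (p : ℝ) < maxE F q t := by
        have htnS : t ∉ S := fun hin => absurd (le_csSup hSb hin) (not_le.mpr hts)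
        rw [hS] at htnS
        simp only [Set.mem_setOf_eq, Set.mem_Icc, not_and, not_le] at htnS
        exact htnS ⟨by linarith, htt1⟩
      exact hCc t ⟨by linarith, htt1⟩ p q hq0 (crossing_of hF hminlt hmaxgt)
    · push_neg at hχ
      refine ⟨s, ⟨hs0, hs1⟩, p, q, hq0, Or.inr fun x => ?_⟩
      have h1 := (minE_spec hF q s).2 x
      have h2 := (maxE_spec hF q s).2 x
      unfold eF at h1 h2
      have : (⇑(shift F s))^[q] x - x = p := le_antisymm (by linarith) (by linarith)
      linarith


open CircleDeg1Lift

lemma add_int_of_add_one {G : ℝ → ℝ} (h1 : ∀ x, G (x + 1) = G x + 1) (x : ℝ) (m : ℤ) :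
    G (x + m) = G x + m := by
  induction m using Int.induction_on with
  | zero => simp
  | succ n ih =>
    have h2 := h1 (x + (n : ℝ))
    push_cast at ih ⊢
    rw [show x + ((n : ℝ) + 1) = x + (n : ℝ) + 1 by ring, h2, ih]
    ring
  | pred n ih =>
    push_cast at ih ⊢
    have h2 := h1 (x + (-(n : ℝ) - 1))
    rw [show x + (-(n : ℝ) - 1) + 1 = x + -(n : ℝ) by ring] at h2
    have hgoal : G (x + (-(n : ℝ) - 1)) = G x + (-(n : ℝ) - 1) := by linarith
    calc G (x + (-(n : ℝ) - 1 : ℝ)) = G x + (-(n : ℝ) - 1) := hgoal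
    _ = G x + (-(n:ℝ) - 1) := by ring

lemma periodic_coe {G : ℝ → ℝ} (h1 : ∀ x, G (x + 1) = G x + 1) :
    Function.Periodic (fun x : ℝ => ((G x : ℝ) : Circle1)) 1 := by
  intro x
  simp only [h1 x]
  rw [AddCircle.coe_add]
  rw [show ((1 : ℝ) : Circle1) = ((((1 : ℤ) : ℝ)) : Circle1) by norm_num, coe_int_eq_zero,
    add_zero]

/-- The circle map induced by a degree-one lift. -/
def circleMap' {G : ℝ → ℝ} (h1 : ∀ x, G (x + 1) = G x + 1) : Circle1 → Circle1 :=
  (periodic_coe h1).lift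

lemma circleMap'_coe {G : ℝ → ℝ} (h1 : ∀ x, G (x + 1) = G x + 1) (x : ℝ) :
    circleMap' h1 (x : Circle1) = ((G x : ℝ) : Circle1) :=
  (periodic_coe h1).lift_coe x

lemma circleMap'_continuous {G : ℝ → ℝ} (hc : Continuous G)
    (h1 : ∀ x, G (x + 1) = G x + 1) : Continuous (circleMap' h1) := by
  have hcc : Continuous fun x : ℝ => ((G x : ℝ) : Circle1) :=
    continuous_quotient_mk'.comp hc
  exact continuous_coinduced_dom.mpr hcc

lemma G_surjective {G : ℝ → ℝ} (hc : Continuous G) (hm : StrictMono G)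
    (h1 : ∀ x, G (x + 1) = G x + 1) : Function.Surjective G :=
  (mkLift G hm.monotone h1).continuous_iff_surjective.mp (by simpa using hc)

lemma circleMap'_bijective {G : ℝ → ℝ} (hc : Continuous G) (hm : StrictMono G)
    (h1 : ∀ x, G (x + 1) = G x + 1) : Function.Bijective (circleMap' h1) := by
  constructor
  · intro a b hab
    obtain ⟨x, rfl⟩ := coe_surj a
    obtain ⟨y, rfl⟩ := coe_surj b
    rw [circleMap'_coe h1 x, circleMap'_coe h1 y] at hab
    obtain ⟨m, hmm⟩ := exists_int_of_coe_eq hab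
    have h3 : G (y + ((-m : ℤ) : ℝ)) = G x := by
      rw [add_int_of_add_one h1]
      push_cast
      linarith
    have hxy : y + ((-m : ℤ) : ℝ) = x := hm.injective h3
    rw [← hxy]
    show ((y + ((-m : ℤ) : ℝ) : ℝ) : Circle1) = ((y : ℝ) : Circle1)
    rw [AddCircle.coe_add, coe_int_eq_zero, add_zero]
  · intro z
    obtain ⟨y, rfl⟩ := coe_surj z
    obtain ⟨x, hx⟩ := G_surjective hc hm h1 y
    exact ⟨(x : Circle1), by rw [circleMap'_coe h1 x, hx]⟩

/-- Package a degree-one strictly monotone continuous lift into `HomeoPlus`. -/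
def mkHomeo {G : ℝ → ℝ} (hc : Continuous G) (hm : StrictMono G)
    (h1 : ∀ x, G (x + 1) = G x + 1) : HomeoPlus :=
  ⟨⟨circleMap' h1, circleMap'_continuous hc h1⟩,
    by
      constructor
      · rw [isHomeomorph_iff_continuous_bijective]
        exact ⟨circleMap'_continuous hc h1, circleMap'_bijective hc hm h1⟩
      · exact ⟨G, hc, hm, h1, fun x => (circleMap'_coe h1 x).symm⟩⟩

lemma mkHomeo_lift {G : ℝ → ℝ} (hc : Continuous G) (hm : StrictMono G)
    (h1 : ∀ x, G (x + 1) = G x + 1) : IsOrientedLift ⇑(mkHomeo hc hm h1).1 G :=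
  ⟨hc, hm, h1, fun x => (circleMap'_coe h1 x).symm⟩

/-- Distance bound between two circle maps from their lifts. -/
lemma dist_le_of_lifts {f g : HomeoPlus} {F G : ℝ → ℝ} (hF : IsOrientedLift ⇑f.1 F)
    (hG : IsOrientedLift ⇑g.1 G) {C : ℝ} (hC : 0 ≤ C) (h : ∀ x, |F x - G x| ≤ C) :
    dist f.1 g.1 ≤ C := by
  rw [ContinuousMap.dist_le hC]
  intro z
  obtain ⟨x, rfl⟩ := coe_surj z
  show dist (f.1 (x : Circle1)) (g.1 (x : Circle1)) ≤ C
  rw [hF.2.2.2 x, hG.2.2.2 x]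
  exact (dist_coe_le _ _).trans (h x)


open CircleDeg1Lift Real

lemma sin_lip (a b : ℝ) : |Real.sin a - Real.sin b| ≤ |a - b| := by
  rw [Real.sin_sub_sin, abs_mul, abs_mul]
  have h1 : |Real.sin ((a - b) / 2)| ≤ |(a - b) / 2| := Real.abs_sin_le_abs
  have h2 : |Real.cos ((a + b) / 2)| ≤ 1 := Real.abs_cos_le_one _
  have h3 : |(2 : ℝ)| = 2 := by norm_num
  calc |(2 : ℝ)| * |Real.sin ((a - b) / 2)| * |Real.cos ((a + b) / 2)|
      ≤ |(2 : ℝ)| * |(a - b) / 2| * 1 := by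
        apply mul_le_mul (mul_le_mul le_rfl h1 (abs_nonneg _) (abs_nonneg _)) h2
          (abs_nonneg _) (by positivity)
    _ = |a - b| := by rw [h3, abs_div]; field_simp; rw [h3]; ring

section kappa

variable {q : ℕ} {δ : ℝ}

/-- The model perturbed rotation `κ x = x + δ sin(2πqx)`. -/
def kap (q : ℕ) (δ : ℝ) : ℝ → ℝ := fun x => x + δ * Real.sin (2 * π * q * x)

lemma kap_cont : Continuous (kap q δ) := by
  unfold kap; fun_prop

lemma kap_strictMono (hδ : 0 < δ) (hδq : δ * (2 * π * q) < 1) :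
    StrictMono (kap q δ) := by
  intro a b hab
  unfold kap
  have hba : 0 < b - a := sub_pos.mpr hab
  have h1 : |Real.sin (2 * π * q * b) - Real.sin (2 * π * q * a)| ≤ 2 * π * q * (b - a) := by
    have h := sin_lip (2 * π * q * b) (2 * π * q * a)
    have h2 : |2 * π * (q : ℝ) * b - 2 * π * q * a| = 2 * π * q * (b - a) := by
      rw [show 2 * π * (q : ℝ) * b - 2 * π * q * a = 2 * π * q * (b - a) by ring]
      exact abs_of_nonneg (mul_nonneg (by positivity) hba.le)
    rwa [h2] at h
  have h4 : -(2 * π * q * (b - a)) ≤ Real.sin (2 * π * q * b) - Real.sin (2 * π * q * a) :=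
    (abs_le.mp h1).1
  have h5 : δ * (2 * π * (q : ℝ)) * (b - a) < 1 * (b - a) :=
    mul_lt_mul_of_pos_right hδq hba
  nlinarith [mul_le_mul_of_nonneg_left h4 hδ.le]

lemma kap_add_int_div (hq : 0 < q) (j : ℤ) (x : ℝ) :
    kap q δ (x + (j : ℝ) / q) = kap q δ x + (j : ℝ) / q := by
  have hq' : ((q : ℝ)) ≠ 0 := by positivity
  unfold kap
  have harg : 2 * π * (q : ℝ) * (x + (j : ℝ) / q) = 2 * π * q * x + (j : ℝ) * (2 * π) := by
    field_simp
  rw [harg, Real.sin_add_int_mul_two_pi]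
  ring

lemma kap_add_one (hq : 0 < q) (x : ℝ) : kap q δ (x + 1) = kap q δ x + 1 := by
  have hq' : ((q : ℝ)) ≠ 0 := by positivity
  have := kap_add_int_div (δ := δ) hq (q : ℤ) x
  rw [show (((q : ℤ) : ℝ)) / (q : ℝ) = 1 by push_cast; field_simp] at this
  exact this

-- positive half-interval dynamics
lemma kap_pos_interval (hq : 0 < q) (hδ : 0 < δ) (hδq : δ * (2 * π * q) < 1) {z : ℝ}
    (hz : z ∈ Set.Ioo 0 (1 / (2 * (q : ℝ)))) :
    kap q δ z ∈ Set.Ioo 0 (1 / (2 * (q : ℝ))) ∧ z < kap q δ z := by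
  have hq' : (0 : ℝ) < q := by exact_mod_cast hq
  have hπ := Real.pi_pos
  have hsin : 0 < Real.sin (2 * π * q * z) := by
    apply Real.sin_pos_of_pos_of_lt_pi
    · have := hz.1; positivity
    · have h2 : 2 * π * (q : ℝ) * z < 2 * π * q * (1 / (2 * q)) :=
        mul_lt_mul_of_pos_left hz.2 (by positivity)
      have h3 : 2 * π * (q : ℝ) * (1 / (2 * q)) = π := by field_simp
      linarith
  have hlt : z < kap q δ z := by unfold kap; nlinarith
  have hub : kap q δ z < 1 / (2 * (q : ℝ)) := by
    have hka : kap q δ (1 / (2 * (q : ℝ))) = 1 / (2 * (q : ℝ)) := by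
      unfold kap
      have h3 : 2 * π * (q : ℝ) * (1 / (2 * q)) = π := by field_simp
      rw [h3, Real.sin_pi]; ring
    calc kap q δ z < kap q δ (1 / (2 * (q : ℝ))) := kap_strictMono hδ hδq hz.2
      _ = 1 / (2 * (q : ℝ)) := hka
  exact ⟨⟨lt_trans hz.1 hlt, hub⟩, hlt⟩

-- negative half-interval dynamics
lemma kap_neg_interval (hq : 0 < q) (hδ : 0 < δ) (hδq : δ * (2 * π * q) < 1) {z : ℝ}
    (hz : z ∈ Set.Ioo (1 / (2 * (q : ℝ))) (1 / (q : ℝ))) :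
    kap q δ z ∈ Set.Ioo (1 / (2 * (q : ℝ))) (1 / (q : ℝ)) ∧ kap q δ z < z := by
  have hq' : (0 : ℝ) < q := by exact_mod_cast hq
  have hπ := Real.pi_pos
  have hsin : Real.sin (2 * π * q * z) < 0 := by
    have h2 : π < 2 * π * (q : ℝ) * z := by
      have := mul_lt_mul_of_pos_left hz.1 (show (0:ℝ) < 2 * π * q by positivity)
      have h3 : 2 * π * (q : ℝ) * (1 / (2 * q)) = π := by field_simp
      linarith
    have h4 : 2 * π * (q : ℝ) * z < 2 * π := by
      have := mul_lt_mul_of_pos_left hz.2 (show (0:ℝ) < 2 * π * q by positivity)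
      have h5 : 2 * π * (q : ℝ) * (1 / (q : ℝ)) = 2 * π := by field_simp
      linarith
    have h6 : Real.sin (2 * π * q * z - 2 * π) < 0 := by
      apply Real.sin_neg_of_neg_of_neg_pi_lt <;> linarith
    rwa [Real.sin_sub_two_pi] at h6
  have hlt : kap q δ z < z := by unfold kap; nlinarith
  have hlb : 1 / (2 * (q : ℝ)) < kap q δ z := by
    have hka : kap q δ (1 / (2 * (q : ℝ))) = 1 / (2 * (q : ℝ)) := by
      unfold kap
      have h3 : 2 * π * (q : ℝ) * (1 / (2 * q)) = π := by field_simp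
      rw [h3, Real.sin_pi]; ring
    calc 1 / (2 * (q : ℝ)) = kap q δ (1 / (2 * (q : ℝ))) := hka.symm
      _ < kap q δ z := kap_strictMono hδ hδq hz.1
  exact ⟨⟨hlb, lt_trans hlt hz.2⟩, hlt⟩

lemma kap_iter_pos (hq : 0 < q) (hδ : 0 < δ) (hδq : δ * (2 * π * q) < 1) :
    1 / (4 * (q : ℝ)) < (kap q δ)^[q] (1 / (4 * (q : ℝ))) := by
  have hq' : (0 : ℝ) < q := by exact_mod_cast hq
  set x₀ : ℝ := 1 / (4 * (q : ℝ)) with hx₀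
  have hx₀m : x₀ ∈ Set.Ioo 0 (1 / (2 * (q : ℝ))) := by
    constructor
    · positivity
    · rw [hx₀, div_lt_div_iff₀ (by positivity) (by positivity)]
      nlinarith
  have hmem : ∀ n, (kap q δ)^[n] x₀ ∈ Set.Ioo 0 (1 / (2 * (q : ℝ))) := by
    intro n
    induction n with
    | zero => simpa using hx₀m
    | succ n ih =>
      rw [Function.iterate_succ_apply']
      exact (kap_pos_interval hq hδ hδq ih).1
  have hstrict : StrictMono fun n : ℕ => (kap q δ)^[n] x₀ := by
    apply strictMono_nat_of_lt_succ
    intro n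
    rw [Function.iterate_succ_apply']
    exact (kap_pos_interval hq hδ hδq (hmem n)).2
  simpa using hstrict hq

lemma kap_iter_neg (hq : 0 < q) (hδ : 0 < δ) (hδq : δ * (2 * π * q) < 1) :
    (kap q δ)^[q] (3 / (4 * (q : ℝ))) < 3 / (4 * (q : ℝ)) := by
  have hq' : (0 : ℝ) < q := by exact_mod_cast hq
  set y₀ : ℝ := 3 / (4 * (q : ℝ)) with hy₀
  have hy₀m : y₀ ∈ Set.Ioo (1 / (2 * (q : ℝ))) (1 / (q : ℝ)) := by
    constructor
    · rw [hy₀, div_lt_div_iff₀ (by positivity) (by positivity)]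
      nlinarith
    · rw [hy₀, div_lt_div_iff₀ (by positivity) (by positivity)]
      nlinarith
  have hmem : ∀ n, (kap q δ)^[n] y₀ ∈ Set.Ioo (1 / (2 * (q : ℝ))) (1 / (q : ℝ)) := by
    intro n
    induction n with
    | zero => simpa using hy₀m
    | succ n ih =>
      rw [Function.iterate_succ_apply']
      exact (kap_neg_interval hq hδ hδq ih).1
  have hstrict : StrictAnti fun n : ℕ => (kap q δ)^[n] y₀ := by
    apply strictAnti_nat_of_succ_lt
    intro n
    rw [Function.iterate_succ_apply']
    exact (kap_neg_interval hq hδ hδq (hmem n)).2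
  simpa using hstrict hq

end kappa

open CircleDeg1Lift Real

lemma iterate_add_one_law {P : ℝ → ℝ} (hP1 : ∀ x, P (x + 1) = P x + 1) (n : ℕ) :
    ∀ x, P^[n] (x + 1) = P^[n] x + 1 := by
  induction n with
  | zero => intro x; simp
  | succ n ih =>
    intro x
    rw [Function.iterate_succ_apply, Function.iterate_succ_apply, hP1 x]
    exact ih (P x)

/-- Perturbation of a rigid map producing a transverse crossing with the same data. -/
lemma rigid_perturb {P : ℝ → ℝ} (hPc : Continuous P) (hPm : StrictMono P)
    (hP1 : ∀ x, P (x + 1) = P x + 1) {p : ℤ} {q : ℕ} (hq : 0 < q)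
    (hrigid : ∀ x, P^[q] x = x + p) {ε' : ℝ} (hε' : 0 < ε') :
    ∃ G : ℝ → ℝ, Continuous G ∧ StrictMono G ∧ (∀ x, G (x + 1) = G x + 1) ∧
      Crossing G p q ∧ ∀ x, |G x - P x| ≤ ε' := by
  have hq' : (0 : ℝ) < q := by exact_mod_cast hq
  have hqne : ((q : ℝ)) ≠ 0 := hq'.ne'
  set c : ℝ := (p : ℝ) / q with hc
  set H : ℝ → ℝ := fun x => (∑ k ∈ Finset.range q, (P^[k] x - (k : ℝ) * c)) / q with hH
  have hHm : StrictMono H := by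
    intro a b hab
    have hsum : (∑ k ∈ Finset.range q, (P^[k] a - (k : ℝ) * c)) <
        ∑ k ∈ Finset.range q, (P^[k] b - (k : ℝ) * c) := by
      apply Finset.sum_lt_sum_of_nonempty (Finset.nonempty_range_iff.mpr hq.ne')
      intro k _
      have := (hPm.iterate k) hab
      linarith
    exact (div_lt_div_iff_of_pos_right hq').mpr hsum
  have hHc : Continuous H := by
    apply Continuous.div_const
    apply continuous_finset_sum
    intro k _
    exact (hPc.iterate k).sub continuous_const
  have hH1 : ∀ x, H (x + 1) = H x + 1 := by
    intro x
    have hterm : ∀ k ∈ Finset.range q, P^[k] (x + 1) - (k : ℝ) * c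
        = (P^[k] x - (k : ℝ) * c) + 1 := fun k _ => by
      rw [iterate_add_one_law hP1 k x]; ring
    show (∑ k ∈ Finset.range q, (P^[k] (x + 1) - (k : ℝ) * c)) / q
      = (∑ k ∈ Finset.range q, (P^[k] x - (k : ℝ) * c)) / q + 1
    rw [Finset.sum_congr rfl hterm, Finset.sum_add_distrib, Finset.sum_const,
      Finset.card_range, nsmul_eq_mul, mul_one, add_div, div_self hqne]
  have hHP : ∀ x, H (P x) = H x + c := by
    intro x
    have hS : (∑ k ∈ Finset.range q, P^[k] (P x)) = (∑ k ∈ Finset.range q, P^[k] x) + p := by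
      have h1 : ∀ k ∈ Finset.range q, P^[k] (P x) = P^[k + 1] x := fun k _ =>
        (Function.iterate_succ_apply P k x).symm
      rw [Finset.sum_congr rfl h1]
      have h2 : (∑ k ∈ Finset.range (q + 1), P^[k] x)
          = (∑ k ∈ Finset.range q, P^[k + 1] x) + P^[0] x := Finset.sum_range_succ' _ _
      have h3 : (∑ k ∈ Finset.range (q + 1), P^[k] x)
          = (∑ k ∈ Finset.range q, P^[k] x) + P^[q] x := Finset.sum_range_succ _ _
      rw [hrigid x] at h3
      simp only [Function.iterate_zero_apply] at h2
      linarith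
    show (∑ k ∈ Finset.range q, (P^[k] (P x) - (k : ℝ) * c)) / q
      = (∑ k ∈ Finset.range q, (P^[k] x - (k : ℝ) * c)) / q + c
    rw [Finset.sum_sub_distrib, Finset.sum_sub_distrib, hS, hc]
    field_simp
    ring
  have hHsurj : Function.Surjective H := G_surjective hHc hHm hH1
  set Hiso := StrictMono.orderIsoOfSurjective H hHm hHsurj with hHiso
  set Hinv : ℝ → ℝ := ⇑Hiso.symm with hHinvdef
  have hinvH : ∀ x, Hinv (H x) = x := fun x =>
    StrictMono.orderIsoOfSurjective_symm_apply_self H hHm hHsurj x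
  have hHinv' : ∀ y, H (Hinv y) = y := fun y =>
    StrictMono.orderIsoOfSurjective_self_symm_apply H hHm hHsurj y
  have hHinvm : StrictMono Hinv := Hiso.symm.strictMono
  have hHinvc : Continuous Hinv := Hiso.symm.continuous
  have hHinv1 : ∀ y, Hinv (y + 1) = Hinv y + 1 := by
    intro y
    apply hHm.injective
    rw [hHinv' (y + 1), hH1, hHinv']
  have hHinvint : ∀ (m : ℤ) (y : ℝ), Hinv (y + m) = Hinv y + m := fun m y =>
    add_int_of_add_one hHinv1 y m
  obtain ⟨δ₀, hδ₀, hδ₀b⟩ := ucont (mkLift Hinv hHinvm.monotone hHinv1) (by simpa using hHinvc) hε'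
  simp only [mkLift_coe] at hδ₀b
  have hπ := Real.pi_pos
  set δ : ℝ := min δ₀ (1 / (1 + 2 * π * q)) with hδdef
  have hδpos : 0 < δ := lt_min hδ₀ (by positivity)
  have hδδ₀ : δ ≤ δ₀ := min_le_left _ _
  have hδq : δ * (2 * π * q) < 1 := by
    have h1 : δ ≤ 1 / (1 + 2 * π * q) := min_le_right _ _
    have h2 : (0 : ℝ) < 1 + 2 * π * q := by positivity
    calc δ * (2 * π * q) ≤ (1 / (1 + 2 * π * q)) * (2 * π * q) :=
          mul_le_mul_of_nonneg_right h1 (by positivity)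
      _ < 1 := by rw [div_mul_eq_mul_div, div_lt_one h2]; nlinarith
  set κ : ℝ → ℝ := kap q δ with hκ
  set M : ℝ → ℝ := fun y => κ y + c with hM
  have hMiter : ∀ n, ∀ y, M^[n] y = κ^[n] y + (n : ℝ) * c := by
    intro n
    induction n with
    | zero => intro y; simp
    | succ n ih =>
      intro y
      rw [Function.iterate_succ_apply', ih y]
      show κ (κ^[n] y + (n : ℝ) * c) + c = κ^[n + 1] y + ((n + 1 : ℕ) : ℝ) * c
      have harg : κ^[n] y + (n : ℝ) * c = κ^[n] y + (((n : ℤ) * p : ℤ) : ℝ) / q := by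
        rw [hc]; push_cast; ring
      rw [harg, hκ, kap_add_int_div hq ((n : ℤ) * p) (κ^[n] y), Function.iterate_succ_apply']
      rw [hc]; push_cast; ring
  set G : ℝ → ℝ := fun x => Hinv (M (H x)) with hG
  have hMm : StrictMono M := fun a b hab => by
    have := kap_strictMono hδpos hδq hab
    show κ a + c < κ b + c
    rw [hκ]
    exact add_lt_add_left this _
  have hMc : Continuous M := by
    have : Continuous κ := by rw [hκ]; exact kap_cont
    exact this.add continuous_const
  have hGm : StrictMono G := fun a b hab => hHinvm (hMm (hHm hab))
  have hGc : Continuous G := hHinvc.comp (hMc.comp hHc)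
  have hM1 : ∀ y, M (y + 1) = M y + 1 := by
    intro y
    show κ (y + 1) + c = κ y + c + 1
    rw [hκ, kap_add_one hq]
    ring
  have hG1 : ∀ x, G (x + 1) = G x + 1 := by
    intro x
    show Hinv (M (H (x + 1))) = Hinv (M (H x)) + 1
    rw [hH1, hM1, hHinv1]
  have hGiter : ∀ n, ∀ x, G^[n] x = Hinv (M^[n] (H x)) := by
    intro n
    induction n with
    | zero => intro x; simp [hinvH x]
    | succ n ih =>
      intro x
      rw [Function.iterate_succ_apply', ih x]
      show Hinv (M (H (Hinv (M^[n] (H x))))) = Hinv (M^[n + 1] (H x))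
      rw [hHinv', ← Function.iterate_succ_apply' M n (H x)]
  have hMq : ∀ y, M^[q] y = κ^[q] y + (p : ℝ) := by
    intro y
    rw [hMiter q y, hc]
    field_simp
  have hcross : Crossing G p q := by
    constructor
    · refine ⟨Hinv (3 / (4 * (q : ℝ))), ?_⟩
      rw [hGiter q _, hHinv', hMq]
      have h2 := kap_iter_neg hq hδpos hδq
      rw [← hκ] at h2
      have h3 : Hinv (κ^[q] (3 / (4 * (q : ℝ))) + (p : ℝ)) =
          Hinv (κ^[q] (3 / (4 * (q : ℝ)))) + (p : ℝ) := hHinvint p _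
      rw [h3]
      have h4 := hHinvm h2
      linarith
    · refine ⟨Hinv (1 / (4 * (q : ℝ))), ?_⟩
      rw [hGiter q _, hHinv', hMq]
      have h2 := kap_iter_pos hq hδpos hδq
      rw [← hκ] at h2
      have h3 : Hinv (κ^[q] (1 / (4 * (q : ℝ))) + (p : ℝ)) =
          Hinv (κ^[q] (1 / (4 * (q : ℝ)))) + (p : ℝ) := hHinvint p _
      rw [h3]
      have h4 := hHinvm h2
      linarith
  have hdist : ∀ x, |G x - P x| ≤ ε' := by
    intro x
    have h1 : P x = Hinv (H x + c) := by rw [← hHP x, hinvH]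
    have h2 : G x = Hinv (H x + c + δ * Real.sin (2 * π * q * H x)) := by
      show Hinv (M (H x)) = _
      congr 1
      show κ (H x) + c = _
      rw [hκ]
      show H x + δ * Real.sin (2 * π * q * H x) + c = _
      ring
    rw [h1, h2]
    apply hδ₀b
    rw [show H x + c + δ * Real.sin (2 * π * q * H x) - (H x + c)
      = δ * Real.sin (2 * π * q * H x) by ring]
    rw [abs_mul, abs_of_pos hδpos]
    have hs : |Real.sin (2 * π * q * H x)| ≤ 1 :=
      abs_le.mpr ⟨Real.neg_one_le_sin _, Real.sin_le_one _⟩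
    nlinarith
  exact ⟨G, hGc, hGm, hG1, hcross, hdist⟩


open CircleDeg1Lift

/-- Stability of crossings in the `C⁰` metric. -/
lemma crossing_nbhd {f : HomeoPlus} {F : ℝ → ℝ} (hF : IsOrientedLift ⇑f.1 F) {p : ℤ} {q : ℕ}
    (hcr : Crossing F p q) :
    ∃ ε > 0, ∀ g : HomeoPlus, dist f.1 g.1 < ε →
      ∃ G : ℝ → ℝ, IsOrientedLift ⇑g.1 G ∧ Crossing G p q := by
  obtain ⟨⟨x₀, hx₀⟩, ⟨y₀, hy₀⟩⟩ := hcr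
  set δ : ℝ := min (x₀ + p - F^[q] x₀) (F^[q] y₀ - (y₀ + p)) with hδ
  have hδpos : 0 < δ := lt_min (by linarith) (by linarith)
  obtain ⟨ε₁, hε₁, hε₁b⟩ := iter_approx (ofLift hF) (by simpa using hF.1) q (δ / 2) (by linarith)
  refine ⟨min (min ε₁ (δ / 2)) (1 / 3), by positivity, fun g hdist => ?_⟩
  obtain ⟨G₀, hG₀⟩ := g.2.2
  have hdz : ∀ z, dist (f.1 z) (g.1 z) < min (min ε₁ (δ / 2)) (1 / 3) := fun z =>
    lt_of_le_of_lt (ContinuousMap.dist_apply_le_dist z) hdist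
  obtain ⟨G, hGlift, hGb⟩ := lift_align hF hG₀ (min_le_right _ _) hdz
  have hGb' : ∀ x, |G x - F x| ≤ ε₁ := fun x =>
    (hGb x).trans ((min_le_left _ _).trans (min_le_left _ _))
  have happrox := hε₁b G hGb'
  simp only [ofLift_coe] at happrox
  have hδ1 : δ ≤ x₀ + p - F^[q] x₀ := min_le_left _ _
  have hδ2 : δ ≤ F^[q] y₀ - (y₀ + p) := min_le_right _ _
  refine ⟨G, hGlift, ⟨x₀, ?_⟩, ⟨y₀, ?_⟩⟩
  · have h := abs_le.mp (happrox x₀)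
    linarith [h.2]
  · have h := abs_le.mp (happrox y₀)
    linarith [h.1]

/-- The good set: circle homeomorphisms admitting a transverse periodic orbit. -/
def GoodSet : Set HomeoPlus :=
  {f | ∃ (F : ℝ → ℝ) (p : ℤ) (q : ℕ), 0 < q ∧ IsOrientedLift ⇑f.1 F ∧ Crossing F p q}

lemma goodSet_isOpen : IsOpen GoodSet := by
  rw [Metric.isOpen_iff]
  rintro f ⟨F, p, q, hq, hF, hcr⟩
  obtain ⟨ε, hε, hεb⟩ := crossing_nbhd hF hcr
  refine ⟨ε, hε, fun g hg => ?_⟩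
  rw [Metric.mem_ball, Subtype.dist_eq, dist_comm] at hg
  obtain ⟨G, hGlift, hGcr⟩ := hεb g hg
  exact ⟨G, p, q, hq, hGlift, hGcr⟩

lemma tau_rat {f : HomeoPlus} {F : ℝ → ℝ} (hF : IsOrientedLift ⇑f.1 F) {p : ℤ} {q : ℕ}
    (hq : 0 < q) (hcr : Crossing F p q) :
    (ofLift hF).translationNumber = (p : ℝ) / q := by
  have hq' : ((q : ℝ)) ≠ 0 := by positivity
  have := translationNumber_eq_of_crossing (F := ofLift hF) (p := p) (q := q)
    (by simpa using hcr)
  field_simp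
  linarith [this]

lemma goodSet_rational : ∀ f ∈ GoodSet, ∃ r : ℚ,
    HasRotationNumber (⇑f.1) ((r : ℝ) : Circle1) := by
  rintro f ⟨F, p, q, hq, hF, hcr⟩
  refine ⟨(p : ℚ) / (q : ℚ), ?_⟩
  have h1 := hasRotationNumber_ofLift hF
  have h2 : (((p : ℚ) / (q : ℚ) : ℚ) : ℝ) = (ofLift hF).translationNumber := by
    rw [tau_rat hF hq hcr]
    push_cast
    ring
  rwa [← h2] at h1

lemma goodSet_locally_constant : ∀ f ∈ GoodSet, ∃ U : Set HomeoPlus, IsOpen U ∧ f ∈ U ∧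
    ∀ g ∈ U ∩ GoodSet, ∀ ρf ρg : Circle1,
      HasRotationNumber (⇑f.1) ρf → HasRotationNumber (⇑g.1) ρg → ρg = ρf := by
  rintro f ⟨F, p, q, hq, hF, hcr⟩
  obtain ⟨ε, hε, hεb⟩ := crossing_nbhd hF hcr
  refine ⟨Metric.ball f ε, Metric.isOpen_ball, Metric.mem_ball_self hε, ?_⟩
  rintro g ⟨hgU, -⟩ ρf ρg hρf hρg
  rw [Metric.mem_ball, Subtype.dist_eq, dist_comm] at hgU
  obtain ⟨G, hGlift, hGcr⟩ := hεb g hgU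
  have h1 : ρf = ((ofLift hF).translationNumber : ℝ) := rotationNumber_unique hF hρf
  have h2 : ρg = ((ofLift hGlift).translationNumber : ℝ) := rotationNumber_unique hGlift hρg
  rw [h1, h2, tau_rat hF hq hcr, tau_rat hGlift hq hGcr]

lemma goodSet_dense : Dense GoodSet := by
  rw [Metric.dense_iff]
  intro f r hr
  obtain ⟨F, hF⟩ := f.2.2
  set t1 : ℝ := min r 1 / 4 with ht1def
  have ht1 : 0 < t1 := by
    rw [ht1def]
    have : 0 < min r 1 := lt_min hr one_pos
    positivity
  have ht1r : 2 * t1 < r := by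
    rw [ht1def]
    rcases min_cases r 1 with ⟨h1, _⟩ | ⟨h1, h2⟩
    · rw [h1]; linarith
    · rw [h1]; linarith
  obtain ⟨s, hs, p, q, hq, hcase⟩ := cross_or_rigid (ofLift hF) (by simpa using hF.1) ht1
  have hFc : Continuous F := hF.1
  have hFm : StrictMono F := hF.2.1
  have hF1 : ∀ x, F (x + 1) = F x + 1 := hF.2.2.1
  have hPc : Continuous (fun x => F x + s) := hFc.add continuous_const
  have hPm : StrictMono (fun x => F x + s) := fun a b hab => by
    simpa using hFm hab
  have hP1 : ∀ x, (fun x => F x + s) (x + 1) = (fun x => F x + s) x + 1 := fun x => by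
    simp only [hF1 x]; ring
  have hcoe : ⇑(shift (ofLift hF) s) = fun x => F x + s := by
    funext x; rfl
  rcases hcase with hcr | hrigid
  · -- crossing at parameter s
    rw [hcoe] at hcr
    set g : HomeoPlus := mkHomeo hPc hPm hP1 with hg
    refine ⟨g, ?_, ?_⟩
    · rw [Metric.mem_ball, Subtype.dist_eq]
      have hd : dist g.1 f.1 ≤ s := by
        apply dist_le_of_lifts (mkHomeo_lift hPc hPm hP1) hF hs.1
        intro x
        rw [show F x + s - F x = s by ring, abs_of_nonneg hs.1]
      calc dist g.1 f.1 ≤ s := hd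
        _ ≤ t1 := hs.2
        _ < r := by linarith
    · exact ⟨fun x => F x + s, p, q, hq, mkHomeo_lift hPc hPm hP1, hcr⟩
  · -- rigid at parameter s: perturb
    rw [hcoe] at hrigid
    obtain ⟨G, hGc, hGm, hG1, hGcr, hGd⟩ :=
      rigid_perturb hPc hPm hP1 hq hrigid (ε' := t1) ht1
    set g : HomeoPlus := mkHomeo hGc hGm hG1 with hg
    refine ⟨g, ?_, ?_⟩
    · rw [Metric.mem_ball, Subtype.dist_eq]
      have hd : dist g.1 f.1 ≤ s + t1 := by
        apply dist_le_of_lifts (mkHomeo_lift hGc hGm hG1) hF (by linarith [hs.1])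
        intro x
        have h1 := hGd x
        have h2 : |G x - F x| ≤ |G x - (F x + s)| + |F x + s - F x| := by
          have := abs_sub_le (G x) (F x + s) (F x)
          simpa using this
        rw [show F x + s - F x = s by ring, abs_of_nonneg hs.1] at h2
        linarith
      calc dist g.1 f.1 ≤ s + t1 := hd
        _ ≤ 2 * t1 := by linarith [hs.2]
        _ < r := ht1r
    · exact ⟨G, p, q, hq, mkHomeo_lift hGc hGm hG1, hGcr⟩


end RotAux

/-- There is an open and dense subset `O` of `Homeo₊(S¹)` such that every `f ∈ O` has a
rational rotation number, and the rotation number is locally constant on `O`. -/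
theorem exists_open_dense_rational_rotation_number :
    ∃ O : Set HomeoPlus, IsOpen O ∧ Dense O ∧
      (∀ f ∈ O, ∃ q : ℚ, HasRotationNumber (⇑f.1) ((q : ℝ) : Circle1)) ∧
      (∀ f ∈ O, ∃ U : Set HomeoPlus, IsOpen U ∧ f ∈ U ∧
        ∀ g ∈ U ∩ O, ∀ ρf ρg : Circle1,
          HasRotationNumber (⇑f.1) ρf → HasRotationNumber (⇑g.1) ρg → ρg = ρf) := by
  exact ⟨RotAux.GoodSet, RotAux.goodSet_isOpen, RotAux.goodSet_dense,
    RotAux.goodSet_rational, RotAux.goodSet_locally_constant⟩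

end
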